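/- Under the Euler-scheme setting below, for every n ≥ 0 and all indices 0 ≤ r, j ≤ 2^n, ‖y(t^n_j) − y(t^n_r)‖ ≤ G₁·|t^n_j − t^n_r|^α, where G₁ = (L + hFC_α)(1 + ω^{−1}), L = (4/(1 − 2^{1−2α}))·(hC_α)²·F₁·F, and ω = (hFC_α/L)^{1/α}. -/

import Mathlib

open Real

set_option maxHeartbeats 1000000

noncomputable section

/-- Maximum-absolute-entry norm of a vector. -/
def vnorm {d : ℕ} (v : Fin d → ℝ) : ℝ := ⨆ i, |v i|


lemma KIcore {α a b : ℝ} (hα : 1/2 < α) (hα1 : α ≤ 1) (hb : 0 < b) (hba : b ≤ a) (hab : a ≤ 2*b) :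
    a^(2*α) + b^(2*α) + ((1 - (2:ℝ)^(1-2*α))/2) * (a^α * b^α) ≤ (a+b)^(2*α) := by
  have ha : 0 < a := lt_of_lt_of_le hb hba
  have h2α : (1:ℝ) ≤ 2*α := by linarith
  have hα0 : (0:ℝ) < α := by linarith
  set lam : ℝ := (1 - (2:ℝ)^(1-2*α))/2 with hlam
  have hθ1 : (2:ℝ)^(1-2*α) ≤ 1 :=
    Real.rpow_le_one_of_one_le_of_nonpos (by norm_num) (by linarith)
  have hlam0 : 0 ≤ lam := by rw [hlam]; linarith
  have e1 : 1 - (2:ℝ)^(1-2*α) ≤ 2*α - 1 := by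
    have h := Real.add_one_le_exp ((1-2*α) * Real.log 2)
    have hrw : (2:ℝ)^(1-2*α) = Real.exp ((1-2*α) * Real.log 2) := by
      rw [Real.rpow_def_of_pos (by norm_num), mul_comm]
    have hlog : Real.log 2 ≤ 1 := by
      have := Real.log_le_sub_one_of_pos (x := 2) (by norm_num); linarith
    have hlog0 : 0 < Real.log 2 := Real.log_pos (by norm_num)
    have : (1-2*α) * 1 ≤ (1-2*α) * Real.log 2 := by nlinarith
    rw [hrw]; linarith
  have hpow1 : ∀ c : ℝ, 0 < c → c^(2*α) = c^(2*α-1) * c := by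
    intro c hc
    have h' : 2*α = (2*α-1)+1 := by ring
    rw [h', Real.rpow_add_one hc.ne']; ring_nf
  have hmono : b^(2*α-1) ≤ a^(2*α-1) := Real.rpow_le_rpow hb.le hba (by linarith)
  have f1 : b^(2*α) * a ≤ a^(2*α) * b := by
    rw [hpow1 a ha, hpow1 b hb]
    calc b^(2*α-1) * b * a = b^(2*α-1) * (b*a) := by ring
    _ ≤ a^(2*α-1) * (b*a) := mul_le_mul_of_nonneg_right hmono (by positivity)
    _ = a^(2*α-1) * a * b := by ring
  have hsplit_a : a^(1-α) * a^α = a := by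
    rw [← Real.rpow_add ha]; norm_num
  have hsplit_b : b^(1-α) * b^α = b := by
    rw [← Real.rpow_add hb]; norm_num
  have h2b : a^(1-α) ≤ (2:ℝ)^(1-α) * b^(1-α) := by
    rw [← Real.mul_rpow (by norm_num) hb.le]
    exact Real.rpow_le_rpow ha.le hab (by linarith)
  have f2a : a * b^α ≤ (2:ℝ)^(1-α) * (a^α * b) := by
    calc a * b^α = a^(1-α) * (a^α * b^α) := by nth_rewrite 1 [← hsplit_a]; ring
    _ ≤ ((2:ℝ)^(1-α) * b^(1-α)) * (a^α * b^α) :=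
        mul_le_mul_of_nonneg_right h2b (by positivity)
    _ = (2:ℝ)^(1-α) * (a^α * (b^(1-α) * b^α)) := by ring
    _ = (2:ℝ)^(1-α) * (a^α * b) := by rw [hsplit_b]
  have h2exp : (2:ℝ)^(1-α) ≤ 2 := by
    calc (2:ℝ)^(1-α) ≤ (2:ℝ)^(1:ℝ) := Real.rpow_le_rpow_of_exponent_le (by norm_num) (by linarith)
    _ = 2 := Real.rpow_one 2
  have hlam2 : lam * (2:ℝ)^(1-α) ≤ 2*α - 1 := by
    have h2p : (0:ℝ) < (2:ℝ)^(1-α) := Real.rpow_pos_of_pos (by norm_num) _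
    nlinarith
  have haa : a^α * a^α = a^(2*α) := by
    rw [← Real.rpow_add ha]; ring_nf
  have hAα : (0:ℝ) < a^α := Real.rpow_pos_of_pos ha _
  have f2 : lam * (a^α * b^α) * a ≤ (2*α-1) * (a^(2*α) * b) := by
    calc lam * (a^α * b^α) * a = lam * ((a * b^α) * a^α) := by ring
    _ ≤ lam * (((2:ℝ)^(1-α) * (a^α * b)) * a^α) := by
        apply mul_le_mul_of_nonneg_left _ hlam0
        exact mul_le_mul_of_nonneg_right f2a hAα.le
    _ = (lam * (2:ℝ)^(1-α)) * (a^α * a^α * b) := by ring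
    _ ≤ (2*α-1) * (a^α * a^α * b) := mul_le_mul_of_nonneg_right hlam2 (by positivity)
    _ = (2*α-1) * (a^(2*α) * b) := by rw [haa]
  have hbern : 1 + (2*α) * (b/a) ≤ (1 + b/a)^(2*α) := by
    apply one_add_mul_self_le_rpow_one_add _ h2α
    have : (0:ℝ) ≤ b/a := by positivity
    linarith
  have hsum : (a+b)^(2*α) = a^(2*α) * (1+b/a)^(2*α) := by
    rw [← Real.mul_rpow ha.le (by positivity)]
    congr 1; field_simp
  have hA2 : (0:ℝ) < a^(2*α) := Real.rpow_pos_of_pos ha _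
  have hber2 : a^(2*α) * (1 + (2*α)*(b/a)) ≤ (a+b)^(2*α) := by
    rw [hsum]; exact mul_le_mul_of_nonneg_left hbern hA2.le
  have hber3 : a^(2*α) * a + (2*α) * (a^(2*α) * b) ≤ (a+b)^(2*α) * a := by
    have h := mul_le_mul_of_nonneg_right hber2 ha.le
    have hrw : a^(2*α) * (1 + (2*α)*(b/a)) * a = a^(2*α) * a + (2*α) * (a^(2*α) * b) := by
      field_simp
    linarith [hrw ▸ h]
  have total : (a^(2*α) + b^(2*α) + lam * (a^α * b^α)) * a ≤ (a+b)^(2*α) * a := by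
    calc (a^(2*α) + b^(2*α) + lam * (a^α * b^α)) * a
        = a^(2*α)*a + (b^(2*α)*a + lam * (a^α * b^α) * a) := by ring
      _ ≤ a^(2*α)*a + (a^(2*α)*b + (2*α-1)*(a^(2*α)*b)) := by linarith
      _ = a^(2*α)*a + (2*α)*(a^(2*α)*b) := by ring
      _ ≤ (a+b)^(2*α) * a := hber3
  exact le_of_mul_le_mul_right total ha


lemma jensen2 {α : ℝ} (hα0 : 0 < α) (hα1 : α ≤ 1) (a c : ℝ) (ha : 0 ≤ a) (hc : 0 ≤ c) (N : ℕ) :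
    a^α + (N:ℝ)^(1-α) * ((N:ℝ)*c)^α ≤ ((N:ℝ)+1)^(1-α) * (a + (N:ℝ)*c)^α := by
  rcases Nat.eq_zero_or_pos N with rfl | hN
  · simp [Real.zero_rpow hα0.ne', Real.one_rpow]
  have hNpos : (0:ℝ) < N := by exact_mod_cast hN
  set M : ℝ := (N:ℝ) + 1 with hM
  have hMpos : (0:ℝ) < M := by positivity
  have hconc := Real.concaveOn_rpow hα0.le hα1
  have hkey := hconc.2 (show (M*a) ∈ Set.Ici (0:ℝ) by simp [Set.mem_Ici]; positivity)
    (show (M*c) ∈ Set.Ici (0:ℝ) by simp [Set.mem_Ici]; positivity)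
    (show (0:ℝ) ≤ M⁻¹ by positivity) (show (0:ℝ) ≤ (N:ℝ)/M by positivity)
    (show M⁻¹ + (N:ℝ)/M = 1 by rw [hM]; field_simp; ring)
  simp only [smul_eq_mul] at hkey
  have hcomb : M⁻¹ * (M*a) + (N:ℝ)/M * (M*c) = a + (N:ℝ)*c := by rw [hM]; field_simp
  rw [hcomb] at hkey
  have hma : (M*a)^α = M^α * a^α := Real.mul_rpow hMpos.le ha
  have hmc : (M*c)^α = M^α * c^α := Real.mul_rpow hMpos.le hc
  rw [hma, hmc] at hkey
  have hstep : a^α + (N:ℝ)*c^α ≤ M^(1-α) * (a + (N:ℝ)*c)^α := by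
    have h2 := mul_le_mul_of_nonneg_left hkey
      (le_of_lt (Real.rpow_pos_of_pos hMpos (1-α)))
    have hMM : M^(1-α) * M^α = M := by
      rw [← Real.rpow_add hMpos]; norm_num
    have hrw : M^(1-α) * (M⁻¹ * (M^α * a^α) + (N:ℝ)/M * (M^α * c^α))
        = (M^(1-α) * M^α) * M⁻¹ * a^α + (M^(1-α) * M^α) * ((N:ℝ)/M) * c^α := by ring
    rw [hrw, hMM] at h2
    have h3 : M * M⁻¹ = 1 := mul_inv_cancel₀ hMpos.ne'
    have h4 : M * ((N:ℝ)/M) = (N:ℝ) := by field_simp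
    rw [h3, h4] at h2
    linarith
  have hNc : (N:ℝ)^(1-α) * ((N:ℝ)*c)^α = (N:ℝ) * c^α := by
    rw [Real.mul_rpow hNpos.le hc, ← mul_assoc, ← Real.rpow_add hNpos]
    norm_num
  rw [hNc]
  exact hstep

theorem stmt13 (d h : ℕ) (hd : 0 < d) (hh : 0 < h)
    (α Cα F F₁ : ℝ) (hα : 1/2 < α) (hα1 : α ≤ 1) (hCα : 0 < Cα)
    (x : ℝ → Fin h → ℝ)
    (hx : ∀ s t : ℝ, s ∈ Set.Icc (0:ℝ) 1 → t ∈ Set.Icc (0:ℝ) 1 →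
      vnorm (fun j => x s j - x t j) ≤ Cα * |s - t| ^ α)
    (f : (Fin d → ℝ) → Fin d → Fin h → ℝ)
    (hfb : ∀ y i j, |f y i j| ≤ F)
    (hfl : ∀ y z i j, |f y i j - f z i j| ≤ F₁ * vnorm (fun l => y l - z l))
    (y0 : Fin d → ℝ) (y : ℕ → ℕ → Fin d → ℝ)
    (hy0 : ∀ n, y n 0 = y0)
    (hyrec : ∀ n k : ℕ, k < 2 ^ n → ∀ i,
      y n (k + 1) i = y n k i +
        ∑ j, f (y n k) i j * (x (((k:ℝ) + 1) / 2 ^ n) j - x ((k:ℝ) / 2 ^ n) j))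
    (L ω G₁ : ℝ)
    (hL : L = 4 / (1 - (2:ℝ) ^ (1 - 2 * α)) * ((h:ℝ) * Cα) ^ 2 * F₁ * F)
    (hω : ω = ((h:ℝ) * F * Cα / L) ^ (1/α))
    (hG : G₁ = (L + (h:ℝ) * F * Cα) * (1 + ω⁻¹)) :
    ∀ n r j : ℕ, r ≤ 2 ^ n → j ≤ 2 ^ n →
      vnorm (fun i => y n j i - y n r i) ≤
        G₁ * |(j:ℝ) / 2 ^ n - (r:ℝ) / 2 ^ n| ^ α := by
  haveI hdne : Nonempty (Fin d) := Fin.pos_iff_nonempty.mp hd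
  haveI hhne : Nonempty (Fin h) := Fin.pos_iff_nonempty.mp hh
  have hα0 : (0:ℝ) < α := by linarith
  have hαne : α ≠ 0 := ne_of_gt hα0
  have hhR : (0:ℝ) < (h:ℝ) := by exact_mod_cast hh
  -- vnorm basics
  have vnorm_le_d : ∀ (v : Fin d → ℝ) (B : ℝ), (∀ i, |v i| ≤ B) → vnorm v ≤ B :=
    fun v B hB => ciSup_le hB
  have le_vnorm_h : ∀ (v : Fin h → ℝ) (j : Fin h), |v j| ≤ vnorm v := by
    intro v j
    exact le_ciSup (f := fun j => |v j|) (Set.Finite.bddAbove (Set.finite_range _)) j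
  -- constants
  have F0 : 0 ≤ F := le_trans (abs_nonneg _) (hfb y0 ⟨0, hd⟩ ⟨0, hh⟩)
  have F₁0 : 0 ≤ F₁ := by
    have h1 := hfl y0 (fun l => y0 l + 1) ⟨0, hd⟩ ⟨0, hh⟩
    have h2 : vnorm (fun l => y0 l - (y0 l + 1)) = 1 := by
      have : (fun l : Fin d => y0 l - (y0 l + 1)) = fun _ => (-1:ℝ) := by funext l; ring
      rw [this]
      show ⨆ _ : Fin d, |(-1:ℝ)| = 1
      rw [ciSup_const]; norm_num
    rw [h2, mul_one] at h1
    exact le_trans (abs_nonneg _) h1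
  set K : ℝ := (h:ℝ) * F * Cα with hK
  have K0 : 0 ≤ K := by positivity
  have hθ1 : (2:ℝ)^(1-2*α) < 1 :=
    Real.rpow_lt_one_of_one_lt_of_neg (by norm_num) (by linarith)
  have hθ0 : (0:ℝ) < (2:ℝ)^(1-2*α) := Real.rpow_pos_of_pos (by norm_num) _
  have hLnn : 0 ≤ L := by
    rw [hL]
    have h4 : (0:ℝ) ≤ 4 / (1 - (2:ℝ)^(1-2*α)) := by
      apply div_nonneg (by norm_num); linarith
    exact mul_nonneg (mul_nonneg (mul_nonneg h4 (by positivity)) F₁0) F0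
  have hlamL : (1 - (2:ℝ)^(1-2*α))/2 * L = 2 * ((h:ℝ) * F₁ * Cα) * K := by
    rw [hL, hK]
    have hne : (1 - (2:ℝ)^(1-2*α)) ≠ 0 := by linarith
    field_simp
    ring
  intro n
  have h2n : (0:ℝ) < 2^n := by positivity
  -- grid membership
  have grid_mem : ∀ k : ℕ, k ≤ 2^n → ((k:ℝ)/2^n) ∈ Set.Icc (0:ℝ) 1 := by
    intro k hk
    constructor
    · positivity
    · rw [div_le_one h2n]
      calc (k:ℝ) ≤ ((2^n : ℕ):ℝ) := by exact_mod_cast hk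
      _ = 2^n := by push_cast; ring
  -- x increment bound
  have xinc : ∀ a m : ℕ, a + m ≤ 2^n → ∀ j : Fin h,
      |x ((((a+m:ℕ)):ℝ)/2^n) j - x ((a:ℝ)/2^n) j| ≤ Cα * ((m:ℝ)/2^n)^α := by
    intro a m ham j
    have hs := hx ((((a+m:ℕ)):ℝ)/2^n) ((a:ℝ)/2^n) (grid_mem _ ham) (grid_mem a (by omega))
    have h1 := le_trans (le_vnorm_h _ j) hs
    have h2 : |(((a+m:ℕ)):ℝ)/2^n - (a:ℝ)/2^n| = (m:ℝ)/2^n := by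
      push_cast
      rw [div_sub_div_same]
      have hmm : (a:ℝ) + m - a = m := by ring
      rw [hmm, abs_of_nonneg (by positivity)]
    rwa [h2] at h1
  -- sum bound
  have fsum : ∀ (z : Fin d → ℝ) (a m : ℕ), a + m ≤ 2^n → ∀ i,
      |∑ j, f z i j * (x ((((a+m:ℕ)):ℝ)/2^n) j - x ((a:ℝ)/2^n) j)| ≤ K * ((m:ℝ)/2^n)^α := by
    intro z a m ham i
    have hterm : ∀ j : Fin h, |f z i j * (x ((((a+m:ℕ)):ℝ)/2^n) j - x ((a:ℝ)/2^n) j)|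
        ≤ F * (Cα * ((m:ℝ)/2^n)^α) := by
      intro j
      rw [abs_mul]
      exact mul_le_mul (hfb z i j) (xinc a m ham j) (abs_nonneg _) F0
    calc |∑ j, f z i j * (x ((((a+m:ℕ)):ℝ)/2^n) j - x ((a:ℝ)/2^n) j)|
        ≤ ∑ j, |f z i j * (x ((((a+m:ℕ)):ℝ)/2^n) j - x ((a:ℝ)/2^n) j)| :=
          Finset.abs_sum_le_sum_abs _ _
      _ ≤ ∑ _j : Fin h, F * (Cα * ((m:ℝ)/2^n)^α) := Finset.sum_le_sum (fun j _ => hterm j)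
      _ = (h:ℝ) * (F * (Cα * ((m:ℝ)/2^n)^α)) := by
          rw [Finset.sum_const, Finset.card_univ, Fintype.card_fin, nsmul_eq_mul]
      _ = K * ((m:ℝ)/2^n)^α := by rw [hK]; ring
  -- single Euler step
  have estep : ∀ k : ℕ, k < 2^n → ∀ i,
      y n (k+1) i - y n k i = ∑ j, f (y n k) i j * (x ((((k+1:ℕ)):ℝ)/2^n) j - x ((k:ℝ)/2^n) j) := by
    intro k hk i
    have h1 := hyrec n k hk i
    have hc : (((k+1:ℕ)):ℝ) = (k:ℝ) + 1 := by push_cast; ring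
    rw [hc, h1]; ring

  -- Claim A
  have hdiv : ∀ a b : ℝ, a ≤ b → a/2^n ≤ b/2^n := fun a b hab => by gcongr
  have sq_rpow : ∀ t : ℝ, 0 < t → (t^α)^2 = t^(2*α) := by
    intro t ht
    rw [sq, ← Real.rpow_add ht]; ring_nf
  have claimA : ∀ m r : ℕ, r + m ≤ 2^n → L * ((m:ℝ)/2^n)^α ≤ K → ∀ i,
      |y n (r+m) i - y n r i -
        ∑ j, f (y n r) i j * (x ((((r+m:ℕ)):ℝ)/2^n) j - x ((r:ℝ)/2^n) j)|
      ≤ L * (((m:ℝ)/2^n)^α)^2 := by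
    intro m
    induction m using Nat.strong_induction_on with
    | _ m IH =>
    intro r hrm hloc i
    by_cases hm0 : m = 0
    · subst hm0
      simp only [Nat.add_zero, sub_self, mul_zero, Finset.sum_const_zero, sub_zero, abs_zero]
      positivity
    by_cases hm1 : m = 1
    · subst hm1
      rw [estep r (by omega) i]
      simp only [sub_self, abs_zero]
      positivity
    -- m ≥ 2
    obtain ⟨m₁, m₂, h1, h2, h3, hsum⟩ :
        ∃ m₁ m₂ : ℕ, 1 ≤ m₂ ∧ m₂ ≤ m₁ ∧ m₁ ≤ 2*m₂ ∧ m₁ + m₂ = m :=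
      ⟨m - m/2, m/2, by omega, by omega, by omega, by omega⟩
    rw [← hsum] at hrm hloc ⊢
    have hassoc : r + (m₁ + m₂) = r + m₁ + m₂ := by omega
    rw [hassoc]
    have hm₁m : m₁ < m := by omega
    have hm₂m : m₂ < m := by omega
    have hsub1 : r + m₁ ≤ 2^n := by omega
    set τ1 : ℝ := (m₁:ℝ)/2^n with hτ1
    set τ2 : ℝ := (m₂:ℝ)/2^n with hτ2
    set τ : ℝ := (((m₁+m₂:ℕ)):ℝ)/2^n with hτ
    have hτ2pos : 0 < τ2 := by
      rw [hτ2]; apply div_pos _ h2n; exact_mod_cast h1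
    have hτ21 : τ2 ≤ τ1 := by
      rw [hτ1, hτ2]; exact hdiv _ _ (by exact_mod_cast h2)
    have hτ1pos : 0 < τ1 := lt_of_lt_of_le hτ2pos hτ21
    have hτ12 : τ1 ≤ 2*τ2 := by
      rw [hτ1, hτ2, mul_div_assoc']; exact hdiv _ _ (by exact_mod_cast h3)
    have hττ : τ = τ1 + τ2 := by
      rw [hτ, hτ1, hτ2, ← add_div]; push_cast; ring
    have hτpos : 0 < τ := by rw [hττ]; linarith
    have hloc1 : L * τ1^α ≤ K := by
      refine le_trans ?_ hloc
      apply mul_le_mul_of_nonneg_left _ hLnn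
      apply Real.rpow_le_rpow (by positivity) _ hα0.le
      rw [hτ1]; exact hdiv _ _ (by push_cast; linarith)
    have hloc2 : L * τ2^α ≤ K := by
      refine le_trans ?_ hloc
      apply mul_le_mul_of_nonneg_left _ hLnn
      apply Real.rpow_le_rpow (by positivity) _ hα0.le
      rw [hτ2]; exact hdiv _ _ (by push_cast; linarith)
    have hB := IH m₁ hm₁m r hsub1 hloc1
    have hC := IH m₂ hm₂m (r+m₁) (by omega) hloc2
    -- increment bound on first half
    have hinc1 : vnorm (fun l => y n (r+m₁) l - y n r l) ≤ 2*K*τ1^α := by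
      apply vnorm_le_d
      intro i'
      have hBi := hB i'
      have hSi := fsum (y n r) r m₁ hsub1 i'
      have hsplit : y n (r+m₁) i' - y n r i' =
          (y n (r+m₁) i' - y n r i' -
            ∑ j, f (y n r) i' j * (x ((((r+m₁:ℕ)):ℝ)/2^n) j - x ((r:ℝ)/2^n) j))
          + ∑ j, f (y n r) i' j * (x ((((r+m₁:ℕ)):ℝ)/2^n) j - x ((r:ℝ)/2^n) j) := by ring
      have htri := abs_add_le (y n (r+m₁) i' - y n r i' -
            ∑ j, f (y n r) i' j * (x ((((r+m₁:ℕ)):ℝ)/2^n) j - x ((r:ℝ)/2^n) j))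
          (∑ j, f (y n r) i' j * (x ((((r+m₁:ℕ)):ℝ)/2^n) j - x ((r:ℝ)/2^n) j))
      rw [← hsplit] at htri
      calc |y n (r+m₁) i' - y n r i'| ≤ _ + _ := htri
        _ ≤ L * ((τ1)^α)^2 + K * τ1^α := add_le_add hBi hSi
        _ ≤ 2*K*τ1^α := by nlinarith [Real.rpow_nonneg (le_of_lt hτ1pos) α, hloc1]
    -- sum telescope identity
    have key : (∑ j, f (y n r) i j * (x ((((r+m₁+m₂:ℕ)):ℝ)/2^n) j - x ((r:ℝ)/2^n) j))
        = (∑ j, f (y n r) i j * (x ((((r+m₁:ℕ)):ℝ)/2^n) j - x ((r:ℝ)/2^n) j))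
        + (∑ j, f (y n (r+m₁)) i j * (x ((((r+m₁+m₂:ℕ)):ℝ)/2^n) j - x ((((r+m₁:ℕ)):ℝ)/2^n) j))
        - (∑ j, (f (y n (r+m₁)) i j - f (y n r) i j) *
            (x ((((r+m₁+m₂:ℕ)):ℝ)/2^n) j - x ((((r+m₁:ℕ)):ℝ)/2^n) j)) := by
      rw [← Finset.sum_add_distrib, ← Finset.sum_sub_distrib]
      exact Finset.sum_congr rfl (fun j _ => by ring)
    have hsplitA : y n (r+m₁+m₂) i - y n r i -
          ∑ j, f (y n r) i j * (x ((((r+m₁+m₂:ℕ)):ℝ)/2^n) j - x ((r:ℝ)/2^n) j)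
        = (y n (r+m₁) i - y n r i -
            ∑ j, f (y n r) i j * (x ((((r+m₁:ℕ)):ℝ)/2^n) j - x ((r:ℝ)/2^n) j))
        + (y n (r+m₁+m₂) i - y n (r+m₁) i -
            ∑ j, f (y n (r+m₁)) i j * (x ((((r+m₁+m₂:ℕ)):ℝ)/2^n) j - x ((((r+m₁:ℕ)):ℝ)/2^n) j))
        + (∑ j, (f (y n (r+m₁)) i j - f (y n r) i j) *
            (x ((((r+m₁+m₂:ℕ)):ℝ)/2^n) j - x ((((r+m₁:ℕ)):ℝ)/2^n) j)) := by
      rw [key]; ring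
    -- cross term bound
    have hD : |∑ j, (f (y n (r+m₁)) i j - f (y n r) i j) *
          (x ((((r+m₁+m₂:ℕ)):ℝ)/2^n) j - x ((((r+m₁:ℕ)):ℝ)/2^n) j)|
        ≤ (h:ℝ) * (F₁ * (2*K*τ1^α) * (Cα * τ2^α)) := by
      have hterm : ∀ j : Fin h, |(f (y n (r+m₁)) i j - f (y n r) i j) *
            (x ((((r+m₁+m₂:ℕ)):ℝ)/2^n) j - x ((((r+m₁:ℕ)):ℝ)/2^n) j)|
          ≤ F₁ * (2*K*τ1^α) * (Cα * τ2^α) := by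
        intro j
        rw [abs_mul]
        have hf1 : |f (y n (r+m₁)) i j - f (y n r) i j| ≤ F₁ * (2*K*τ1^α) :=
          le_trans (hfl _ _ i j) (mul_le_mul_of_nonneg_left hinc1 F₁0)
        have hx1 : |x ((((r+m₁+m₂:ℕ)):ℝ)/2^n) j - x ((((r+m₁:ℕ)):ℝ)/2^n) j| ≤ Cα * τ2^α := by
          have := xinc (r+m₁) m₂ (by omega) j
          rwa [hτ2]
        exact mul_le_mul hf1 hx1 (abs_nonneg _)
          (mul_nonneg F₁0 (mul_nonneg (by linarith : (0:ℝ) ≤ 2*K)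
            (Real.rpow_nonneg (le_of_lt hτ1pos) α)))
      calc |∑ j, (f (y n (r+m₁)) i j - f (y n r) i j) *
            (x ((((r+m₁+m₂:ℕ)):ℝ)/2^n) j - x ((((r+m₁:ℕ)):ℝ)/2^n) j)|
          ≤ ∑ j, |(f (y n (r+m₁)) i j - f (y n r) i j) *
            (x ((((r+m₁+m₂:ℕ)):ℝ)/2^n) j - x ((((r+m₁:ℕ)):ℝ)/2^n) j)| :=
            Finset.abs_sum_le_sum_abs _ _
        _ ≤ ∑ _j : Fin h, F₁ * (2*K*τ1^α) * (Cα * τ2^α) :=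
            Finset.sum_le_sum (fun j _ => hterm j)
        _ = (h:ℝ) * (F₁ * (2*K*τ1^α) * (Cα * τ2^α)) := by
            rw [Finset.sum_const, Finset.card_univ, Fintype.card_fin, nsmul_eq_mul]
    -- combine
    have habs : |y n (r+m₁+m₂) i - y n r i -
          ∑ j, f (y n r) i j * (x ((((r+m₁+m₂:ℕ)):ℝ)/2^n) j - x ((r:ℝ)/2^n) j)|
        ≤ L * ((τ1)^α)^2 + L * ((τ2)^α)^2 + (h:ℝ) * (F₁ * (2*K*τ1^α) * (Cα * τ2^α)) := by
      rw [hsplitA]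
      refine le_trans (abs_add_le _ _) ?_
      refine add_le_add (le_trans (abs_add_le _ _) (add_le_add (hB i) ?_)) hD
      exact hC i
    refine le_trans habs ?_
    -- final numeric inequality via KIcore
    have hKI := KIcore hα hα1 hτ2pos hτ21 hτ12
    have hP : (h:ℝ) * (F₁ * (2*K*τ1^α) * (Cα * τ2^α))
        = (1 - (2:ℝ)^(1-2*α))/2 * L * (τ1^α * τ2^α) := by
      calc (h:ℝ) * (F₁ * (2*K*τ1^α) * (Cα * τ2^α))
          = (2 * ((h:ℝ) * F₁ * Cα) * K) * (τ1^α * τ2^α) := by ring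
        _ = ((1 - (2:ℝ)^(1-2*α))/2 * L) * (τ1^α * τ2^α) := by rw [hlamL]
        _ = (1 - (2:ℝ)^(1-2*α))/2 * L * (τ1^α * τ2^α) := by ring
    rw [hP, sq_rpow τ1 hτ1pos, sq_rpow τ2 hτ2pos, sq_rpow τ hτpos, hττ]
    calc L * τ1^(2*α) + L * τ2^(2*α) + (1 - (2:ℝ)^(1-2*α))/2 * L * (τ1^α * τ2^α)
        = L * (τ1^(2*α) + τ2^(2*α) + (1 - (2:ℝ)^(1-2*α))/2 * (τ1^α * τ2^α)) := by ring
      _ ≤ L * ((τ1+τ2)^(2*α)) := mul_le_mul_of_nonneg_left hKI hLnn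

  -- Claim B : increment bound under locality
  have claimB : ∀ m r : ℕ, r + m ≤ 2^n → L * ((m:ℝ)/2^n)^α ≤ K → ∀ i,
      |y n (r+m) i - y n r i| ≤ (L + K) * ((m:ℝ)/2^n)^α := by
    intro m r hrm hloc i
    have hA := claimA m r hrm hloc i
    have hS := fsum (y n r) r m hrm i
    have hsplit : y n (r+m) i - y n r i =
        (y n (r+m) i - y n r i -
          ∑ j, f (y n r) i j * (x ((((r+m:ℕ)):ℝ)/2^n) j - x ((r:ℝ)/2^n) j))
        + ∑ j, f (y n r) i j * (x ((((r+m:ℕ)):ℝ)/2^n) j - x ((r:ℝ)/2^n) j) := by ring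
    have ht1 : ((m:ℝ)/2^n)^α ≤ 1 := by
      apply Real.rpow_le_one (by positivity) _ hα0.le
      rw [div_le_one h2n]
      calc (m:ℝ) ≤ ((2^n : ℕ):ℝ) := by exact_mod_cast (by omega : m ≤ 2^n)
      _ = 2^n := by push_cast; ring
    have hrn : (0:ℝ) ≤ ((m:ℝ)/2^n)^α := Real.rpow_nonneg (by positivity) _
    have htri := abs_add_le (y n (r+m) i - y n r i -
          ∑ j, f (y n r) i j * (x ((((r+m:ℕ)):ℝ)/2^n) j - x ((r:ℝ)/2^n) j))
        (∑ j, f (y n r) i j * (x ((((r+m:ℕ)):ℝ)/2^n) j - x ((r:ℝ)/2^n) j))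
    rw [← hsplit] at htri
    calc |y n (r+m) i - y n r i| ≤ _ + _ := htri
      _ ≤ L * (((m:ℝ)/2^n)^α)^2 + K * ((m:ℝ)/2^n)^α := add_le_add hA hS
      _ ≤ (L + K) * ((m:ℝ)/2^n)^α := by nlinarith [mul_nonneg hLnn hrn, ht1, hrn, hLnn]
  -- Chaining lemma
  have CH : ∀ p : ℕ, 1 ≤ p →
      (∀ a q : ℕ, a + q ≤ 2^n → q ≤ p → ∀ i,
        |y n (a+q) i - y n a i| ≤ (L+K) * ((q:ℝ)/2^n)^α) →
      ∀ N r m : ℕ, m ≤ N * p → r + m ≤ 2^n → ∀ i,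
        |y n (r+m) i - y n r i| ≤ (L+K) * ((N:ℝ)^(1-α) * ((m:ℝ)/2^n)^α) := by
    intro p hp Hp N
    have hLK : (0:ℝ) ≤ L + K := by linarith
    induction N with
    | zero =>
      intro r m hm hrm i
      have hm0 : m = 0 := by omega
      subst hm0
      simp only [Nat.add_zero, sub_self, abs_zero]
      positivity
    | succ N IHN =>
      intro r m hm hrm i
      by_cases hcase : m ≤ N * p
      · refine le_trans (IHN r m hcase hrm i) ?_
        apply mul_le_mul_of_nonneg_left _ hLK
        apply mul_le_mul_of_nonneg_right _ (Real.rpow_nonneg (by positivity) _)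
        apply Real.rpow_le_rpow (by positivity) (by push_cast; linarith) (by linarith)
      · push_neg at hcase
        have hm' : m ≤ N * p + p := by
          calc m ≤ (N+1) * p := hm
          _ = N * p + p := by ring
        set q : ℕ := m - N * p with hq
        have hq1 : 1 ≤ q := by omega
        have hqp : q ≤ p := by omega
        have hmq : m = q + N * p := by omega
        have hpc1 := Hp r q (by omega) hqp i
        have hpc2 := IHN (r+q) (N*p) le_rfl (by omega) i
        have hidx : r + q + N * p = r + m := by omega
        rw [hidx] at hpc2
        have htri : |y n (r+m) i - y n r i| ≤
            (L+K) * ((q:ℝ)/2^n)^α + (L+K) * ((N:ℝ)^(1-α) * (((N*p:ℕ):ℝ)/2^n)^α) := by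
          have hsp : y n (r+m) i - y n r i =
              (y n (r+q) i - y n r i) + (y n (r+m) i - y n (r+q) i) := by ring
          have htri2 := abs_add_le (y n (r+q) i - y n r i) (y n (r+m) i - y n (r+q) i)
          rw [← hsp] at htri2
          calc |y n (r+m) i - y n r i| ≤ _ + _ := htri2
            _ ≤ _ := add_le_add hpc1 hpc2
        refine le_trans htri ?_
        have hjen := jensen2 hα0 hα1 ((q:ℝ)/2^n) ((p:ℝ)/2^n)
          (by positivity) (by positivity) N
        have he1 : (((N*p:ℕ)):ℝ)/2^n = (N:ℝ) * ((p:ℝ)/2^n) := by push_cast; ring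
        have he2 : ((q:ℝ)/2^n) + (N:ℝ) * ((p:ℝ)/2^n) = (m:ℝ)/2^n := by
          rw [hmq]; push_cast; ring
        rw [he2] at hjen
        have hc3 : (((N+1:ℕ)):ℝ) = (N:ℝ) + 1 := by push_cast; ring
        calc (L+K) * ((q:ℝ)/2^n)^α + (L+K) * ((N:ℝ)^(1-α) * (((N*p:ℕ):ℝ)/2^n)^α)
            = (L+K) * (((q:ℝ)/2^n)^α + (N:ℝ)^(1-α) * ((((N*p:ℕ)):ℝ)/2^n)^α) := by ring
          _ = (L+K) * (((q:ℝ)/2^n)^α + (N:ℝ)^(1-α) * ((N:ℝ) * ((p:ℝ)/2^n))^α) := by rw [he1]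
          _ ≤ (L+K) * (((N:ℝ)+1)^(1-α) * ((m:ℝ)/2^n)^α) :=
              mul_le_mul_of_nonneg_left hjen hLK
          _ = (L+K) * ((((N+1:ℕ)):ℝ)^(1-α) * ((m:ℝ)/2^n)^α) := by rw [hc3]
  -- one-sided main bound
  have main : ∀ r m : ℕ, r + m ≤ 2^n → ∀ i,
      |y n (r+m) i - y n r i| ≤ G₁ * ((m:ℝ)/2^n)^α := by
    intro r m hrm i
    have hLK : (0:ℝ) ≤ L + K := by linarith
    have hωnn : 0 ≤ ω := by
      rw [hω]; exact Real.rpow_nonneg (div_nonneg K0 hLnn) _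
    have hωinv : 0 ≤ ω⁻¹ := inv_nonneg.mpr hωnn
    have hG1LK : L + K ≤ G₁ := by rw [hG]; nlinarith [hLK, hωinv]
    have htnn : (0:ℝ) ≤ ((m:ℝ)/2^n)^α := Real.rpow_nonneg (by positivity) _
    have ht1 : (m:ℝ)/2^n ≤ 1 := by
      rw [div_le_one h2n]
      calc (m:ℝ) ≤ ((2^n : ℕ):ℝ) := by exact_mod_cast (by omega : m ≤ 2^n)
      _ = 2^n := by push_cast; ring
    by_cases hloc : L * ((m:ℝ)/2^n)^α ≤ K
    · refine le_trans (claimB m r hrm hloc i) ?_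
      exact mul_le_mul_of_nonneg_right hG1LK htnn
    · push_neg at hloc
      have hL0 : 0 < L := by
        rcases lt_or_eq_of_le hLnn with h' | h'
        · exact h'
        · exfalso; rw [← h', zero_mul] at hloc; exact absurd K0 (not_le.mpr hloc)
      have hF0 : 0 < F := by
        rcases lt_or_eq_of_le F0 with h' | h'
        · exact h'
        · exfalso; rw [← h', mul_zero] at hL; rw [hL] at hL0; exact lt_irrefl _ hL0
      have hK0 : 0 < K := by rw [hK]; positivity
      have hω0 : 0 < ω := by
        rw [hω]; exact Real.rpow_pos_of_pos (div_pos hK0 hL0) _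
      have hωα : ω^α = K/L := by
        rw [hω, ← Real.rpow_mul (le_of_lt (div_pos hK0 hL0)), one_div,
          inv_mul_cancel₀ hαne, Real.rpow_one]
      have hωt : ω < (m:ℝ)/2^n := by
        by_contra hcon
        push_neg at hcon
        have : ((m:ℝ)/2^n)^α ≤ ω^α := Real.rpow_le_rpow (by positivity) hcon hα0.le
        rw [hωα] at this
        have : L * ((m:ℝ)/2^n)^α ≤ L * (K/L) := mul_le_mul_of_nonneg_left this hLnn
        rw [mul_div_cancel₀ _ hL0.ne'] at this
        exact absurd this (not_le.mpr hloc)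
      have hm1 : 1 ≤ m := by
        by_contra hcon
        have hm0 : m = 0 := by omega
        rw [hm0] at hloc
        simp only [Nat.cast_zero, zero_div] at hloc
        rw [Real.zero_rpow hαne, mul_zero] at hloc
        exact absurd K0 (not_le.mpr hloc)
      by_cases hsmall : ω * 2^n < 1
      · -- p = 1
        have Hp : ∀ a q : ℕ, a + q ≤ 2^n → q ≤ 1 → ∀ i',
            |y n (a+q) i' - y n a i'| ≤ (L+K) * ((q:ℝ)/2^n)^α := by
          intro a q haq hq i'
          interval_cases q
          · simp only [Nat.add_zero, sub_self, abs_zero, Nat.cast_zero, zero_div]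
            rw [Real.zero_rpow hαne, mul_zero]
          · rw [estep a (by omega) i']
            refine le_trans (fsum (y n a) a 1 haq i') ?_
            apply mul_le_mul_of_nonneg_right _ (Real.rpow_nonneg (by positivity) _)
            linarith
        have hch := CH 1 le_rfl Hp m r m (by omega) hrm i
        refine le_trans hch ?_
        have hmone : (1:ℝ) ≤ (m:ℝ) := by exact_mod_cast hm1
        have hminv : (m:ℝ)^(1-α) ≤ 1 + ω⁻¹ := by
          have e1 : (m:ℝ)^(1-α) ≤ (m:ℝ)^(1:ℝ) :=
            Real.rpow_le_rpow_of_exponent_le hmone (by linarith)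
          rw [Real.rpow_one] at e1
          have e2 : (m:ℝ) ≤ (2:ℝ)^n := by
            calc (m:ℝ) ≤ ((2^n : ℕ):ℝ) := by exact_mod_cast (by omega : m ≤ 2^n)
            _ = 2^n := by push_cast; ring
          have e3 : (2:ℝ)^n < ω⁻¹ := by
            have e4 : (2:ℝ)^n = ω⁻¹ * (ω * 2^n) := by field_simp
            calc (2:ℝ)^n = ω⁻¹ * (ω * 2^n) := e4
            _ < ω⁻¹ * 1 := by
                apply mul_lt_mul_of_pos_left hsmall (inv_pos.mpr hω0)
            _ = ω⁻¹ := mul_one _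
          linarith
        calc (L+K) * ((m:ℝ)^(1-α) * ((m:ℝ)/2^n)^α)
            ≤ (L+K) * ((1 + ω⁻¹) * ((m:ℝ)/2^n)^α) := by
              apply mul_le_mul_of_nonneg_left _ hLK
              exact mul_le_mul_of_nonneg_right hminv htnn
          _ = (L+K) * (1 + ω⁻¹) * ((m:ℝ)/2^n)^α := by ring
          _ ≤ G₁ * ((m:ℝ)/2^n)^α := by rw [hG]
      · -- p = ⌊ω·2^n⌋ ≥ 1
        push_neg at hsmall
        set p : ℕ := Nat.floor (ω * 2^n) with hpdef
        have hp1 : 1 ≤ p := by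
          rw [hpdef]
          exact Nat.le_floor (by exact_mod_cast hsmall)
        have hple : (p:ℝ) ≤ ω * 2^n := Nat.floor_le (by positivity)
        have hplt : ω * 2^n < (p:ℝ) + 1 := Nat.lt_floor_add_one _
        have Hp : ∀ a q : ℕ, a + q ≤ 2^n → q ≤ p → ∀ i',
            |y n (a+q) i' - y n a i'| ≤ (L+K) * ((q:ℝ)/2^n)^α := by
          intro a q haq hq i'
          apply claimB q a haq _ i'
          have hqω : (q:ℝ)/2^n ≤ ω := by
            rw [div_le_iff₀ h2n]
            calc (q:ℝ) ≤ (p:ℝ) := by exact_mod_cast hq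
            _ ≤ ω * 2^n := hple
          have : ((q:ℝ)/2^n)^α ≤ ω^α := Real.rpow_le_rpow (by positivity) hqω hα0.le
          calc L * ((q:ℝ)/2^n)^α ≤ L * ω^α := mul_le_mul_of_nonneg_left this hLnn
            _ = L * (K/L) := by rw [hωα]
            _ = K := mul_div_cancel₀ _ hL0.ne'
        set N : ℕ := m / p + 1 with hNdef
        have hmN : m ≤ N * p := by
          have hd1 := Nat.div_add_mod m p
          have hd2 : m % p < p := Nat.mod_lt _ (by omega)
          calc m = p * (m/p) + m % p := hd1.symm
            _ ≤ p * (m/p) + p := by omega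
            _ = (m/p + 1) * p := by ring
        have hch := CH p hp1 Hp N r m hmN hrm i
        refine le_trans hch ?_
        have hN1 : (1:ℝ) ≤ (N:ℝ) := by
          have : 1 ≤ N := by rw [hNdef]; exact Nat.succ_le_succ (Nat.zero_le _)
          exact_mod_cast this
        have hNle : (N:ℝ) ≤ (1 + ω⁻¹)^2 := by
          have e1 : (N:ℝ) ≤ (m:ℝ)/(p:ℝ) + 1 := by
            rw [hNdef]; push_cast
            have := Nat.cast_div_le (α := ℝ) (m := m) (n := p)
            linarith
          have hppos : (0:ℝ) < p := by exact_mod_cast hp1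
          have e2 : (m:ℝ)/(p:ℝ) ≤ 2/ω := by
            rw [div_le_div_iff₀ hppos hω0]
            have e3 : (m:ℝ) * ω ≤ 2^n * ω := by
              apply mul_le_mul_of_nonneg_right _ hωnn
              calc (m:ℝ) ≤ ((2^n : ℕ):ℝ) := by exact_mod_cast (by omega : m ≤ 2^n)
              _ = 2^n := by push_cast; ring
            have e5 : (m:ℝ) * ω < 2 * p := by
              calc (m:ℝ) * ω ≤ 2^n * ω := e3
                _ = ω * 2^n := by ring
                _ < (p:ℝ) + 1 := hplt
                _ ≤ 2 * p := by linarith [(by exact_mod_cast hp1 : (1:ℝ) ≤ (p:ℝ))]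
            linarith
          have e4 : 2/ω = 2 * ω⁻¹ := by rw [div_eq_mul_inv]
          rw [e4] at e2
          nlinarith [sq_nonneg ω⁻¹]
        have hNhalf : (N:ℝ)^(1-α) ≤ 1 + ω⁻¹ := by
          have e1 : (N:ℝ)^(1-α) ≤ (N:ℝ)^((1:ℝ)/2) :=
            Real.rpow_le_rpow_of_exponent_le hN1 (by linarith)
          have e2 : (N:ℝ)^((1:ℝ)/2) ≤ ((1 + ω⁻¹)^2)^((1:ℝ)/2) :=
            Real.rpow_le_rpow (by positivity) hNle (by norm_num)
          have e3 : ((1 + ω⁻¹)^2)^((1:ℝ)/2) = 1 + ω⁻¹ := by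
            rw [← Real.rpow_natCast (1 + ω⁻¹) 2, ← Real.rpow_mul (by positivity)]
            norm_num
          linarith
        have hωinv0 : (0:ℝ) ≤ 1 + ω⁻¹ := by positivity
        calc (L+K) * ((N:ℝ)^(1-α) * ((m:ℝ)/2^n)^α)
            ≤ (L+K) * ((1 + ω⁻¹) * ((m:ℝ)/2^n)^α) := by
              apply mul_le_mul_of_nonneg_left _ hLK
              exact mul_le_mul_of_nonneg_right hNhalf htnn
          _ = (L+K) * (1 + ω⁻¹) * ((m:ℝ)/2^n)^α := by ring
          _ ≤ G₁ * ((m:ℝ)/2^n)^α := by rw [hG]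
  -- wrap up: both orders
  intro r j hr hj
  rcases le_total r j with hrj | hjr
  · apply vnorm_le_d
    intro i
    have h1 := main r (j - r) (by omega) i
    rw [(by omega : r + (j - r) = j)] at h1
    refine le_trans h1 (le_of_eq ?_)
    congr 2
    rw [abs_of_nonneg]
    · rw [Nat.cast_sub hrj]; ring
    · have : (r:ℝ) ≤ (j:ℝ) := by exact_mod_cast hrj
      have := hdiv (r:ℝ) (j:ℝ) this
      linarith
  · apply vnorm_le_d
    intro i
    rw [abs_sub_comm]
    have h1 := main j (r - j) (by omega) i
    rw [(by omega : j + (r - j) = r)] at h1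
    refine le_trans h1 (le_of_eq ?_)
    congr 2
    rw [abs_sub_comm, abs_of_nonneg]
    · rw [Nat.cast_sub hjr]; ring
    · have : (j:ℝ) ≤ (r:ℝ) := by exact_mod_cast hjr
      have := hdiv (j:ℝ) (r:ℝ) this
      linarith

end
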